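/- The open set U := 𝔻_ℂ ∖ {1, 2, 4, 8, 16, …, +∞} (removing all powers of 2 and the point +∞) satisfies N¹_∞(U) = S¹∞; in particular, since +∞ ∉ U, U is not regular at ∞. -/

import Mathlib

open Metric Filter

noncomputable section

/-- The radial compactification `𝔻_ℂ = ℂ ⊔ S¹∞` of `ℂ`. -/
abbrev DC := ℂ ⊕ Metric.sphere (0 : ℂ) 1

/-- The bijection from the closed unit disc to `𝔻_ℂ`: `z ↦ z/(1-|z|)` inside,
`z ↦ z∞` on the boundary circle. -/
noncomputable def phiDC : Metric.closedBall (0 : ℂ) 1 → DC :=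
  fun z =>
    if h : ‖(z : ℂ)‖ < 1 then
      Sum.inl ((1 - ‖(z : ℂ)‖)⁻¹ • (z : ℂ))
    else
      Sum.inr ⟨(z : ℂ), by
        have h1 : ‖(z : ℂ)‖ ≤ 1 := mem_closedBall_zero_iff.mp z.2
        exact mem_sphere_zero_iff_norm.mpr (le_antisymm h1 (not_lt.mp h))⟩

/-- The topology of `𝔻_ℂ`, transported from the closed unit disc via `phiDC`. -/
instance DCtop : TopologicalSpace DC :=
  TopologicalSpace.coinduced phiDC inferInstance

/-- The circle at infinity `S¹∞ ⊂ 𝔻_ℂ`. -/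
def Sinf : Set DC := Set.range Sum.inr

/-- The point `+∞ = (1)∞ ∈ S¹∞`. -/
def plusInfty : DC := Sum.inr ⟨1, by simp⟩

/-- `clos¹_∞(A)` for `A ⊂ ℂ`: points `z∞ ∈ S¹∞` that are limits of sequences
`z_k ∈ A` with `|z_{k+1}|/|z_k| → 1`. -/
def closOneC (A : Set ℂ) : Set DC :=
  {p | (∃ x : Metric.sphere (0 : ℂ) 1, p = Sum.inr x) ∧ ∃ z : ℕ → ℂ,
    (∀ k, z k ∈ A) ∧ Tendsto (fun k => (Sum.inl (z k) : DC)) atTop (nhds p) ∧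
    Tendsto (fun k => ‖z (k + 1)‖ / ‖z k‖) atTop (nhds 1)}

/-- `N¹_∞(U) := S¹∞ ∖ clos¹_∞(ℂ ∖ U)` for `U ⊂ 𝔻_ℂ`. -/
def NOneC (U : Set DC) : Set DC :=
  Sinf \ closOneC {z : ℂ | (Sum.inl z : DC) ∉ U}

/-- The open set `U := 𝔻_ℂ ∖ {1, 2, 4, 8, 16, …, +∞}`. -/
def U8 : Set DC :=
  Set.univ \ ((Sum.inl '' {z : ℂ | ∃ k : ℕ, z = ((2 ^ k : ℕ) : ℂ)}) ∪ {plusInfty})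

lemma phiDC_inl_eq {z : Metric.closedBall (0:ℂ) 1} {c : ℂ} (h : phiDC z = Sum.inl c) :
    (z : ℂ) = (1 + ‖c‖)⁻¹ • c := by
  unfold phiDC at h
  split_ifs at h with hz
  · have hc : (1 - ‖(z:ℂ)‖)⁻¹ • (z:ℂ) = c := by injection h
    have h1 : (0:ℝ) < 1 - ‖(z:ℂ)‖ := by linarith
    have hzc : (z:ℂ) = (1 - ‖(z:ℂ)‖) • c := by
      rw [← hc, smul_smul, mul_inv_cancel₀ h1.ne', one_smul]
    have hn : ‖(z:ℂ)‖ = (1 - ‖(z:ℂ)‖) * ‖c‖ := by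
      conv_lhs => rw [hzc]
      rw [norm_smul, Real.norm_of_nonneg h1.le]
    have hcpos : (0:ℝ) < 1 + ‖c‖ := by positivity
    have h2 : 1 - ‖(z:ℂ)‖ = (1 + ‖c‖)⁻¹ := by
      have hmul : (1 - ‖(z:ℂ)‖) * (1 + ‖c‖) = 1 := by nlinarith
      exact eq_inv_of_mul_eq_one_left hmul
    rw [hzc, h2]

lemma isOpen_compl_inl (c : ℂ) : IsOpen ({Sum.inl c}ᶜ : Set DC) := by
  rw [DCtop, isOpen_coinduced, Set.preimage_compl, ← isClosed_compl_iff, compl_compl]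
  have hsub : (phiDC ⁻¹' {Sum.inl c}).Subsingleton := by
    intro a ha b hb
    exact Subtype.ext ((phiDC_inl_eq ha).trans (phiDC_inl_eq hb).symm)
  exact hsub.finite.isClosed

lemma closOneC_pow2_empty' :
    ∀ p : DC, ∀ x : Metric.sphere (0:ℂ) 1, p = Sum.inr x →
    ∀ z : ℕ → ℂ, (∀ k, ∃ m : ℕ, z k = ((2 ^ m : ℕ) : ℂ)) →
    Tendsto (fun k => (Sum.inl (z k) : DC)) atTop (nhds p) →
    Tendsto (fun k => ‖z (k + 1)‖ / ‖z k‖) atTop (nhds 1) →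
    False := by
  intro p x hp z hz hlim hratio
  choose n hn using hz
  -- the ratio is eventually within 1/2 of 1
  have hev : ∀ᶠ k in atTop,
      ‖z (k + 1)‖ / ‖z k‖ ∈ Metric.ball (1:ℝ) (1/2) :=
    hratio (Metric.ball_mem_nhds 1 (by norm_num))
  obtain ⟨N, hN⟩ := eventually_atTop.mp hev
  -- hence n is eventually constant
  have hstep : ∀ k, N ≤ k → n (k + 1) = n k := by
    intro k hk
    have h1 := hN k hk
    rw [hn, hn, Complex.norm_natCast, Complex.norm_natCast, Metric.mem_ball,
      Real.dist_eq] at h1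
    push_cast at h1
    by_contra hne
    rcases lt_or_gt_of_ne hne with hlt | hgt
    · have : (2:ℝ) ^ (n (k+1)) * 2 ≤ 2 ^ (n k) := by
        have : (2:ℝ) ^ (n (k+1) + 1) ≤ 2 ^ (n k) := pow_le_pow_right₀ one_le_two hlt
        simpa [pow_succ] using this
      have hpos : (0:ℝ) < 2 ^ (n k) := by positivity
      have hpos2 : (0:ℝ) < 2 ^ (n (k+1)) := by positivity
      have hle : (2:ℝ) ^ (n (k+1)) / 2 ^ (n k) ≤ 1/2 := by
        rw [div_le_div_iff₀ hpos (by norm_num)]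
        linarith
      rw [abs_lt] at h1
      linarith
    · have : (2:ℝ) ^ (n k) * 2 ≤ 2 ^ (n (k+1)) := by
        have : (2:ℝ) ^ (n k + 1) ≤ 2 ^ (n (k+1)) := pow_le_pow_right₀ one_le_two hgt
        simpa [pow_succ] using this
      have hpos : (0:ℝ) < 2 ^ (n k) := by positivity
      have hge : (2:ℝ) ≤ 2 ^ (n (k+1)) / 2 ^ (n k) := by
        rw [le_div_iff₀ hpos]
        linarith
      rw [abs_lt] at h1
      linarith
  -- so z is eventually constant
  have hconst : ∀ k, N ≤ k → z k = z N := by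
    intro k hk
    induction k with
    | zero => simp [Nat.le_zero.mp hk]
    | succ m ih =>
      rcases Nat.lt_or_ge N (m+1) with h | h
      · have hm : N ≤ m := Nat.lt_succ_iff.mp h
        rw [hn, hstep m hm, ← hn, ih hm]
      · have : N = m + 1 := le_antisymm hk h
        rw [this]
  -- the constant sequence tends to Sum.inr x, contradiction
  have hV : IsOpen ({Sum.inl (z N)}ᶜ : Set DC) := isOpen_compl_inl (z N)
  have hx : (Sum.inr x : DC) ∈ ({Sum.inl (z N)}ᶜ : Set DC) := by simp
  rw [hp] at hlim
  have h2 : ∀ᶠ k in atTop, (Sum.inl (z k) : DC) ∈ ({Sum.inl (z N)}ᶜ : Set DC) :=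
    hlim.eventually_mem (hV.mem_nhds hx)
  rw [eventually_atTop] at h2
  obtain ⟨M, hM⟩ := h2
  have := hM (max M N) (le_max_left _ _)
  rw [hconst (max M N) (le_max_right _ _)] at this
  simp at this

/-- `N¹_∞(U8) = S¹∞`; in particular, since `+∞ ∉ U8`, `U8` is not regular at `∞`
(`N¹_∞(U8) ≠ U8 ∩ S¹∞`). -/
theorem U8_not_regular : NOneC U8 = Sinf ∧ NOneC U8 ≠ U8 ∩ Sinf := by
  have hclos : closOneC {z : ℂ | (Sum.inl z : DC) ∉ U8} = ∅ := by
    ext p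
    simp only [Set.mem_empty_iff_false, iff_false]
    rintro ⟨⟨x, hp⟩, z, hz, hlim, hratio⟩
    refine closOneC_pow2_empty' p x hp z ?_ hlim hratio
    intro k
    have h1 := hz k
    simp only [Set.mem_setOf_eq, U8, Set.mem_diff, Set.mem_univ, true_and,
      not_not] at h1
    rcases h1 with h1 | h1
    · obtain ⟨w, ⟨m, hm⟩, hw⟩ := h1
      exact ⟨m, by rw [← Sum.inl.inj hw, hm]⟩
    · exact absurd h1 (by simp [plusInfty])
  have heq : NOneC U8 = Sinf := by
    rw [NOneC, hclos, Set.diff_empty]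
  refine ⟨heq, ?_⟩
  intro h
  have h1 : plusInfty ∈ NOneC U8 := by
    rw [heq]; exact ⟨_, rfl⟩
  rw [h] at h1
  exact h1.1.2 (Or.inr rfl)
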